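/- Let A be a supersoluble subnormal subgroup of a finite group G with G' ≤ F(G) and AG' normal in G. Then AG' is supersoluble. -/

import Mathlib

/-- A subgroup `H` of `G` is subnormal if there is a chain
`H = c 0 ≤ c 1 ≤ ... ≤ c n = G` with each term normal in the next. -/
def Subgroup.IsSubnormal' {G : Type*} [Group G] (H : Subgroup G) : Prop :=
  ∃ (n : ℕ) (c : Fin (n + 1) → Subgroup G),
    c 0 = H ∧ c (Fin.last n) = ⊤ ∧
    ∀ i : Fin n, c i.castSucc ≤ c i.succ ∧
      ((c i.castSucc).subgroupOf (c i.succ)).Normal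

/-- A group is supersoluble if it has a normal series (all terms normal in `G`)
with cyclic factors; the factor `c (i+1) / c i` being cyclic is expressed as
`c (i+1)` being generated by `c i` together with a single element. -/
def IsSupersolvable (G : Type*) [Group G] : Prop :=
  ∃ (n : ℕ) (c : Fin (n + 1) → Subgroup G),
    c 0 = ⊥ ∧ c (Fin.last n) = ⊤ ∧
    (∀ i, (c i).Normal) ∧
    ∀ i : Fin n, c i.castSucc ≤ c i.succ ∧
      ∃ g ∈ c i.succ, c i.succ ≤ c i.castSucc ⊔ Subgroup.zpowers g

/-- The Fitting subgroup: the join of all normal nilpotent subgroups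
(in a finite group, the largest normal nilpotent subgroup). -/
def fittingSubgroup (G : Type*) [Group G] : Subgroup G :=
  sSup {N : Subgroup G | N.Normal ∧ Group.IsNilpotent N}

instance fittingSubgroup_normal (G : Type*) [Group G] : (fittingSubgroup G).Normal := by
  constructor
  intro x hx g
  rw [fittingSubgroup, sSup_eq_iSup'] at hx ⊢
  refine Subgroup.iSup_induction
    (C := fun y => g * y * g⁻¹ ∈
      ⨆ (N : {N : Subgroup G // N.Normal ∧ Group.IsNilpotent N}), (N : Subgroup G))
    _ hx (fun N y hy => ?_) (by simpa using Subgroup.one_mem _) (fun y z hy hz => ?_)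
  · exact Subgroup.mem_iSup_of_mem N (N.2.1.conj_mem y hy g)
  · simpa [mul_assoc] using Subgroup.mul_mem _ hy hz

/-- `O_p(G)`: the join of all normal `p`-subgroups
(in a finite group, the largest normal `p`-subgroup). -/
def pCore (p : ℕ) (G : Type*) [Group G] : Subgroup G :=
  sSup {N : Subgroup G | N.Normal ∧ IsPGroup p N}

instance pCore_normal (p : ℕ) (G : Type*) [Group G] : (pCore p G).Normal := by
  constructor
  intro x hx g
  rw [pCore, sSup_eq_iSup'] at hx ⊢
  refine Subgroup.iSup_induction
    (C := fun y => g * y * g⁻¹ ∈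
      ⨆ (N : {N : Subgroup G // N.Normal ∧ IsPGroup p N}), (N : Subgroup G))
    _ hx (fun N y hy => ?_) (by simpa using Subgroup.one_mem _) (fun y z hy hz => ?_)
  · exact Subgroup.mem_iSup_of_mem N (N.2.1.conj_mem y hy g)
  · simpa [mul_assoc] using Subgroup.mul_mem _ hy hz

/-- `G` has a Sylow tower of supersoluble type: a normal series `⊥ = c 0 ≤ ... ≤ c n = ⊤`
(all terms normal in `G`) together with strictly decreasing primes `p 0 > p 1 > ... `
exhausting the primes dividing `|G|`, such that each factor `c (i+1) / c i` is a
Sylow `p i`-subgroup of `G / c i` (i.e. has order the full `p i`-part of `|G|`). -/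
def HasSupersolubleSylowTower (G : Type*) [Group G] : Prop :=
  ∃ (n : ℕ) (c : Fin (n + 1) → Subgroup G) (p : Fin n → ℕ),
    c 0 = ⊥ ∧ c (Fin.last n) = ⊤ ∧
    (∀ i, (c i).Normal) ∧
    (∀ i : Fin n, c i.castSucc ≤ c i.succ) ∧
    (∀ i, (p i).Prime) ∧
    (∀ i j : Fin n, i < j → p j < p i) ∧
    (∀ q : ℕ, q.Prime → q ∣ Nat.card G → ∃ i, p i = q) ∧
    (∀ i : Fin n,
      Nat.card (c i.succ) = Nat.card (c i.castSucc) * p i ^ (Nat.card G).factorization (p i))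

section Aux

namespace StmtAux

open Subgroup
open scoped commutatorElement

variable {G : Type*} [Group G]

/-- Iterated commutator chain: `cChain X W 0 = X`, `cChain X W (n+1) = ⁅cChain X W n, W⁆`. -/
def cChain (X W : Subgroup G) : ℕ → Subgroup G
  | 0 => X
  | n + 1 => ⁅cChain X W n, W⁆

@[simp] lemma cChain_zero (X W : Subgroup G) : cChain X W 0 = X := rfl

lemma cChain_succ (X W : Subgroup G) (n : ℕ) :
    cChain X W (n + 1) = ⁅cChain X W n, W⁆ := rfl

lemma cChain_normal (X W : Subgroup G) (hX : X.Normal) (hW : W.Normal) (n : ℕ) :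
    (cChain X W n).Normal := by
  induction n with
  | zero => exact hX
  | succ n ih => exact @Subgroup.commutator_normal _ _ _ _ ih hW

lemma cChain_mono {X X' W W' : Subgroup G} (hX : X ≤ X') (hW : W ≤ W') (n : ℕ) :
    cChain X W n ≤ cChain X' W' n := by
  induction n with
  | zero => exact hX
  | succ n ih => exact commutator_mono ih hW

lemma cChain_succ_le_self (X W : Subgroup G) (hX : X.Normal) (hW : W.Normal) (n : ℕ) :
    cChain X W (n + 1) ≤ cChain X W n := by
  haveI := cChain_normal X W hX hW n
  exact commutator_le_left _ _

lemma cChain_antitone (X W : Subgroup G) (hX : X.Normal) (hW : W.Normal) {m n : ℕ}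
    (h : m ≤ n) : cChain X W n ≤ cChain X W m := by
  induction n with
  | zero => simp [Nat.le_zero.mp h]
  | succ n ih =>
    rcases Nat.lt_or_ge m (n + 1) with h' | h'
    · exact (cChain_succ_le_self X W hX hW n).trans (ih (by omega))
    · have hmn : m = n + 1 := by omega
      simp [hmn]

lemma map_cChain {G' : Type*} [Group G'] (f : G →* G') (X W : Subgroup G) (n : ℕ) :
    (cChain X W n).map f = cChain (X.map f) (W.map f) n := by
  induction n with
  | zero => rfl
  | succ n ih => rw [cChain_succ, map_commutator, ih, cChain_succ]

/-- The join of a family of normal subgroups is normal. -/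
lemma normal_iSup {ι : Sort*} (X : ι → Subgroup G) (hX : ∀ i, (X i).Normal) :
    (⨆ i, X i).Normal := by
  constructor
  intro x hx g
  refine Subgroup.iSup_induction (C := fun y => g * y * g⁻¹ ∈ ⨆ i, X i) X hx
    (fun i y hy => Subgroup.mem_iSup_of_mem i ((hX i).conj_mem y hy g)) ?_ ?_
  · simpa using Subgroup.one_mem _
  · intro y z hy hz
    simpa [mul_assoc] using Subgroup.mul_mem _ hy hz

lemma commutator_iSup_le {ι : Sort*} (X : ι → Subgroup G) (Z : Subgroup G)
    (hX : ∀ i, (X i).Normal) (hZ : Z.Normal) : ⁅⨆ i, X i, Z⁆ ≤ ⨆ i, ⁅X i, Z⁆ := by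
  have hR : (⨆ i, ⁅X i, Z⁆).Normal := by
    refine normal_iSup _ fun i => ?_
    exact @Subgroup.commutator_normal _ _ _ _ (hX i) hZ
  rw [commutator_le]
  intro g hg z hz
  rw [iSup_eq_closure] at hg
  induction hg using closure_induction with
  | mem x hxmem =>
    obtain ⟨i, hxs⟩ := Set.mem_iUnion.mp hxmem
    exact le_iSup (fun i => ⁅X i, Z⁆) i (commutator_mem_commutator hxs hz)
  | one =>
    have h1 : ⁅(1 : G), z⁆ = 1 := by simp [commutatorElement_def]
    rw [h1]; exact one_mem _
  | mul x y hxc hyc ihx ihy =>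
    have e : ⁅x * y, z⁆ = x * ⁅y, z⁆ * x⁻¹ * ⁅x, z⁆ := by
      simp only [commutatorElement_def]; group
    rw [e]
    exact mul_mem (hR.conj_mem _ ihy x) ihx
  | inv x hxc ihx =>
    have e : ⁅x⁻¹, z⁆ = x⁻¹ * ⁅x, z⁆⁻¹ * (x⁻¹)⁻¹ := by
      simp only [commutatorElement_def]; group
    rw [e]
    exact hR.conj_mem _ (inv_mem ihx) x⁻¹

lemma commutator_sup_left_le (X Y Z : Subgroup G) (hX : X.Normal) (hY : Y.Normal)
    (hZ : Z.Normal) : ⁅X ⊔ Y, Z⁆ ≤ ⁅X, Z⁆ ⊔ ⁅Y, Z⁆ := by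
  rw [sup_eq_iSup X Y]
  refine (commutator_iSup_le _ Z (fun b => by cases b <;> simpa) hZ).trans ?_
  refine iSup_le fun b => ?_
  cases b
  · exact le_sup_right
  · exact le_sup_left

lemma commutator_sup_right_le (X Y Z : Subgroup G) (hX : X.Normal) (hY : Y.Normal)
    (hZ : Z.Normal) : ⁅Z, X ⊔ Y⁆ ≤ ⁅Z, X⁆ ⊔ ⁅Z, Y⁆ := by
  rw [commutator_comm Z (X ⊔ Y), commutator_comm Z X, commutator_comm Z Y]
  exact commutator_sup_left_le X Y Z hX hY hZ

/-- "Nice" subgroups: normal subgroups whose iterated self-commutator chain vanishes. -/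
def Nice (W : Subgroup G) : Prop := W.Normal ∧ ∃ n, cChain W W n = ⊥

lemma nice_bot : Nice (⊥ : Subgroup G) := ⟨inferInstance, 0, rfl⟩

lemma nice_mono {X W : Subgroup G} (hXW : X ≤ W) (hX : X.Normal) (hW : Nice W) : Nice X := by
  obtain ⟨hWn, n, hn⟩ := hW
  exact ⟨hX, n, le_bot_iff.mp (hn ▸ cChain_mono hXW hXW n)⟩

lemma nice_of_nilpotent (N : Subgroup G) (hN : N.Normal) (h : Group.IsNilpotent ↥N) :
    Nice N := by
  obtain ⟨n, hn⟩ := _root_.nilpotent_iff_lowerCentralSeries.mp h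
  have key : ∀ m, cChain N N m ≤ (Subgroup.lowerCentralSeries (⊤ : Subgroup ↥N) m).map N.subtype := by
    intro m
    induction m with
    | zero =>
      rw [show Subgroup.lowerCentralSeries (⊤ : Subgroup ↥N) 0 = ⊤ from rfl, ← MonoidHom.range_eq_map,
        Subgroup.range_subtype]
      exact le_rfl
    | succ m ih =>
      rw [cChain_succ]
      have h2 : N = (⊤ : Subgroup ↥N).map N.subtype := by
        rw [← MonoidHom.range_eq_map, Subgroup.range_subtype]
      calc ⁅cChain N N m, N⁆
          ≤ ⁅(Subgroup.lowerCentralSeries (⊤ : Subgroup ↥N) m).map N.subtype, (⊤ : Subgroup ↥N).map N.subtype⁆ :=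
            commutator_mono ih (le_of_eq h2)
        _ = (⁅Subgroup.lowerCentralSeries (⊤ : Subgroup ↥N) m, (⊤ : Subgroup ↥N)⁆).map N.subtype :=
            (map_commutator _ _ _).symm
        _ = (Subgroup.lowerCentralSeries (⊤ : Subgroup ↥N) (m + 1)).map N.subtype := rfl
  refine ⟨hN, n, le_bot_iff.mp ?_⟩
  calc cChain N N n ≤ (Subgroup.lowerCentralSeries (⊤ : Subgroup ↥N) n).map N.subtype := key n
    _ = (⊥ : Subgroup ↥N).map N.subtype := by rw [hn]
    _ ≤ ⊥ := by simp

/-- Fitting's theorem in "Nice" form: the join of two nice subgroups is nice. -/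
lemma nice_sup {W₁ W₂ : Subgroup G} (h1 : Nice W₁) (h2 : Nice W₂) : Nice (W₁ ⊔ W₂) := by
  obtain ⟨hn1, n₁, hc1⟩ := h1
  obtain ⟨hn2, n₂, hc2⟩ := h2
  haveI := hn1; haveI := hn2
  have htn : (⊤ : Subgroup G).Normal := inferInstance
  have hE1 : ∀ m, (cChain ⊤ W₁ m).Normal := cChain_normal ⊤ W₁ htn hn1
  have hE2 : ∀ m, (cChain ⊤ W₂ m).Normal := cChain_normal ⊤ W₂ htn hn2
  have hshift1 : ∀ m, cChain ⊤ W₁ (m + 1) ≤ cChain W₁ W₁ m := by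
    intro m
    induction m with
    | zero => exact commutator_le_right _ _
    | succ m ih => exact commutator_mono ih le_rfl
  have hshift2 : ∀ m, cChain ⊤ W₂ (m + 1) ≤ cChain W₂ W₂ m := by
    intro m
    induction m with
    | zero => exact commutator_le_right _ _
    | succ m ih => exact commutator_mono ih le_rfl
  have hE1bot : ∀ m, n₁ + 1 ≤ m → cChain ⊤ W₁ m = ⊥ := by
    intro m hm
    obtain ⟨k, rfl⟩ : ∃ k, m = k + 1 := ⟨m - 1, by omega⟩
    refine le_bot_iff.mp ((hshift1 k).trans ?_)
    rw [← hc1]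
    exact cChain_antitone W₁ W₁ hn1 hn1 (by omega)
  have hE2bot : ∀ m, n₂ + 1 ≤ m → cChain ⊤ W₂ m = ⊥ := by
    intro m hm
    obtain ⟨k, rfl⟩ : ∃ k, m = k + 1 := ⟨m - 1, by omega⟩
    refine le_bot_iff.mp ((hshift2 k).trans ?_)
    rw [← hc2]
    exact cChain_antitone W₂ W₂ hn2 hn2 (by omega)
  have hsupn : (W₁ ⊔ W₂).Normal := Subgroup.sup_normal W₁ W₂
  refine ⟨hsupn, ?_⟩
  have key : ∀ k, cChain ⊤ (W₁ ⊔ W₂) k ≤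
      ⨆ i : Fin (k + 1), (cChain ⊤ W₁ (i : ℕ) ⊓ cChain ⊤ W₂ (k - (i : ℕ))) := by
    intro k
    induction k with
    | zero =>
      refine le_trans ?_ (le_iSup _ (0 : Fin 1))
      simp
    | succ k ih =>
      have hXnorm : ∀ i : Fin (k + 1),
          (cChain ⊤ W₁ (i : ℕ) ⊓ cChain ⊤ W₂ (k - (i : ℕ))).Normal := fun i =>
        @Subgroup.normal_inf_normal _ _ _ _ (hE1 _) (hE2 _)
      have hFnorm :
          (⨆ i : Fin (k + 1), (cChain ⊤ W₁ (i : ℕ) ⊓ cChain ⊤ W₂ (k - (i : ℕ)))).Normal :=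
        normal_iSup _ hXnorm
      rw [cChain_succ]
      have step1 : ⁅⨆ i : Fin (k + 1), (cChain ⊤ W₁ (i : ℕ) ⊓ cChain ⊤ W₂ (k - (i : ℕ))), W₁⁆ ≤
          ⨆ i : Fin (k + 2), (cChain ⊤ W₁ (i : ℕ) ⊓ cChain ⊤ W₂ (k + 1 - (i : ℕ))) := by
        refine (commutator_iSup_le _ W₁ hXnorm hn1).trans (iSup_le fun i => ?_)
        refine le_trans ?_ (le_iSup _ (⟨(i : ℕ) + 1, by omega⟩ : Fin (k + 2)))
        have hval : ((⟨(i : ℕ) + 1, by omega⟩ : Fin (k + 2)) : ℕ) = (i : ℕ) + 1 := rfl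
        rw [hval]
        have h3 : k + 1 - ((i : ℕ) + 1) = k - (i : ℕ) := by omega
        rw [h3]
        refine le_inf ?_ ?_
        · exact commutator_mono inf_le_left le_rfl
        · haveI := hXnorm i
          exact (commutator_le_left _ _).trans inf_le_right
      have step2 : ⁅⨆ i : Fin (k + 1), (cChain ⊤ W₁ (i : ℕ) ⊓ cChain ⊤ W₂ (k - (i : ℕ))), W₂⁆ ≤
          ⨆ i : Fin (k + 2), (cChain ⊤ W₁ (i : ℕ) ⊓ cChain ⊤ W₂ (k + 1 - (i : ℕ))) := by
        refine (commutator_iSup_le _ W₂ hXnorm hn2).trans (iSup_le fun i => ?_)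
        refine le_trans ?_ (le_iSup _ (⟨(i : ℕ), by omega⟩ : Fin (k + 2)))
        have hval : ((⟨(i : ℕ), by omega⟩ : Fin (k + 2)) : ℕ) = (i : ℕ) := rfl
        rw [hval]
        have h3 : k + 1 - (i : ℕ) = (k - (i : ℕ)) + 1 := by
          have := i.isLt; omega
        rw [h3]
        refine le_inf ?_ ?_
        · haveI := hXnorm i
          exact (commutator_le_left _ _).trans inf_le_left
        · exact commutator_mono inf_le_right le_rfl
      calc ⁅cChain ⊤ (W₁ ⊔ W₂) k, W₁ ⊔ W₂⁆
          ≤ ⁅⨆ i : Fin (k + 1), (cChain ⊤ W₁ (i : ℕ) ⊓ cChain ⊤ W₂ (k - (i : ℕ))), W₁ ⊔ W₂⁆ :=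
            commutator_mono ih le_rfl
        _ ≤ ⁅⨆ i : Fin (k + 1), (cChain ⊤ W₁ (i : ℕ) ⊓ cChain ⊤ W₂ (k - (i : ℕ))), W₁⁆ ⊔
            ⁅⨆ i : Fin (k + 1), (cChain ⊤ W₁ (i : ℕ) ⊓ cChain ⊤ W₂ (k - (i : ℕ))), W₂⁆ :=
            commutator_sup_right_le W₁ W₂ _ hn1 hn2 hFnorm
        _ ≤ _ := sup_le step1 step2
  refine ⟨n₁ + n₂ + 1, le_bot_iff.mp ?_⟩
  calc cChain (W₁ ⊔ W₂) (W₁ ⊔ W₂) (n₁ + n₂ + 1)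
      ≤ cChain ⊤ (W₁ ⊔ W₂) (n₁ + n₂ + 1) := cChain_mono le_top le_rfl _
    _ ≤ ⨆ i : Fin (n₁ + n₂ + 2),
        (cChain ⊤ W₁ (i : ℕ) ⊓ cChain ⊤ W₂ (n₁ + n₂ + 1 - (i : ℕ))) := key _
    _ ≤ ⊥ := by
        refine iSup_le fun i => ?_
        rcases Nat.lt_or_ge (i : ℕ) (n₁ + 1) with h' | h'
        · have : cChain ⊤ W₂ (n₁ + n₂ + 1 - (i : ℕ)) = ⊥ := hE2bot _ (by omega)
          rw [this]; exact inf_le_right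
        · have : cChain ⊤ W₁ (i : ℕ) = ⊥ := hE1bot _ (by omega)
          rw [this]; exact inf_le_left

lemma nice_sSup {s : Set (Subgroup G)} (hs : s.Finite) (h : ∀ N ∈ s, Nice N) :
    Nice (sSup s) := by
  refine Set.Finite.induction_on
    (motive := fun s _ => (∀ N ∈ s, Nice N) → Nice (sSup s)) s hs ?_ ?_ h
  · intro _
    simpa using nice_bot
  · intro a t _ _ ih ht
    rw [sSup_insert]
    exact nice_sup (ht _ (Set.mem_insert _ _)) (ih fun N hN => ht N (Set.mem_insert_of_mem _ hN))

lemma normal_of_commutator_le {H : Subgroup G} (h : commutator G ≤ H) : H.Normal := by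
  constructor
  intro n hn g
  have h1 : ⁅g, n⁆ ∈ H := h (commutator_mem_commutator (mem_top g) (mem_top n))
  have h2 : g * n * g⁻¹ = ⁅g, n⁆ * n := by
    rw [commutatorElement_def]; group
  rw [h2]
  exact mul_mem h1 hn

lemma normal_of_sup_normalizes {B M T : Subgroup G} (hBM : B ⊔ M = ⊤)
    (hB : ∀ b ∈ B, ∀ x ∈ T, b * x * b⁻¹ ∈ T)
    (hM : ∀ m ∈ M, ∀ x ∈ T, m * x * m⁻¹ ∈ T) : T.Normal := by
  have key : ∀ g : G, g ∈ B ⊔ M → ∀ x ∈ T, g * x * g⁻¹ ∈ T := by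
    have h1 : B ≤ normalizer (T : Set G) := by
      intro b hb
      refine mem_normalizer_iff.mpr fun h => ⟨fun hh => hB b hb h hh, fun hh => ?_⟩
      have h2 := hB b⁻¹ (inv_mem hb) _ hh
      have e : b⁻¹ * (b * h * b⁻¹) * b⁻¹⁻¹ = h := by group
      rwa [e] at h2
    have h2 : M ≤ normalizer (T : Set G) := by
      intro m hm
      refine mem_normalizer_iff.mpr fun h => ⟨fun hh => hM m hm h hh, fun hh => ?_⟩
      have h2 := hM m⁻¹ (inv_mem hm) _ hh
      have e : m⁻¹ * (m * h * m⁻¹) * m⁻¹⁻¹ = h := by group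
      rwa [e] at h2
    intro g hg x hx
    have : g ∈ normalizer (T : Set G) := (sup_le h1 h2) hg
    exact (mem_normalizer_iff.mp this x).mp hx
  constructor
  intro x hx g
  exact key g (by rw [hBM]; exact mem_top g) x hx

lemma nat_cross {Q : ℕ → Prop} (h0 : ¬ Q 0) :
    ∀ m, Q m → ∃ j, j + 1 ≤ m ∧ ¬ Q j ∧ Q (j + 1) := by
  intro m
  induction m with
  | zero => intro h; exact absurd h h0
  | succ m ih =>
    intro hQ
    by_cases hm : Q m
    · obtain ⟨j, h1, h2, h3⟩ := ih hm
      exact ⟨j, by omega, h2, h3⟩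
    · exact ⟨m, le_rfl, hm, hQ⟩

lemma isCyclic_sandwich {W : Type*} [Group W] (c : Subgroup W) [c.Normal] (g : W)
    (Vt : Subgroup W) (h1 : Vt ≤ c ⊔ Subgroup.zpowers g) (h2 : Vt ⊓ c = ⊥) :
    IsCyclic ↥Vt := by
  set φ := QuotientGroup.mk' c with hφ
  have hmem : ∀ x : ↥Vt, φ ↑x ∈ Subgroup.zpowers (φ g) := by
    intro x
    have hx : (↑x : W) ∈ (↑(c ⊔ Subgroup.zpowers g) : Set W) := h1 x.2
    rw [Subgroup.normal_mul] at hx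
    obtain ⟨n, hn, z, hz, hnz⟩ := Set.mem_mul.mp hx
    obtain ⟨k, hk⟩ := Subgroup.mem_zpowers_iff.mp hz
    refine Subgroup.mem_zpowers_iff.mpr ⟨k, ?_⟩
    have hn1 : φ n = 1 := by
      have : n ∈ φ.ker := by rw [hφ, QuotientGroup.ker_mk']; exact hn
      exact this
    rw [← hnz, map_mul, ← hk, map_zpow, hn1, one_mul]
  let ψ : ↥Vt →* ↥(Subgroup.zpowers (φ g)) :=
    MonoidHom.codRestrict (φ.comp Vt.subtype) _ hmem
  have hinj : Function.Injective ψ := by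
    intro a b hab
    have h3 : φ ↑a = φ ↑b := congrArg Subtype.val hab
    have h4 : (↑a * (↑b)⁻¹ : W) ∈ c := by
      have h5 : (↑a * (↑b)⁻¹ : W) ∈ φ.ker := by
        refine MonoidHom.mem_ker.mpr ?_
        rw [map_mul, map_inv, h3]
        group
      rwa [hφ, QuotientGroup.ker_mk'] at h5
    have h5 : (↑a * (↑b)⁻¹ : W) ∈ Vt := mul_mem a.2 (inv_mem b.2)
    have h6 : (↑a * (↑b)⁻¹ : W) ∈ (⊥ : Subgroup W) := h2 ▸ Subgroup.mem_inf.mpr ⟨h5, h4⟩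
    exact Subtype.ext (mul_inv_eq_one.mp (Subgroup.mem_bot.mp h6))
  haveI hzc : IsCyclic ↥(Subgroup.zpowers (φ g)) := by
    constructor
    refine ⟨⟨φ g, Subgroup.mem_zpowers _⟩, fun x => ?_⟩
    obtain ⟨k, hk⟩ := Subgroup.mem_zpowers_iff.mp x.2
    refine Subgroup.mem_zpowers_iff.mpr ⟨k, ?_⟩
    exact Subtype.ext (by simpa using hk)
  haveI : IsCyclic ↥(ψ.range) := Subgroup.isCyclic _
  exact isCyclic_of_surjective (MonoidHom.ofInjective hinj).symm
    (MonoidHom.ofInjective hinj).symm.surjective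

lemma isSupersolvable_of_surjective {G₁ G₂ : Type*} [Group G₁] [Group G₂] (f : G₁ →* G₂)
    (hf : Function.Surjective f) (h : IsSupersolvable G₁) : IsSupersolvable G₂ := by
  obtain ⟨n, c, h0, hl, hnorm, hstep⟩ := h
  refine ⟨n, fun i => (c i).map f,
    by show (c 0).map f = ⊥; rw [h0]; exact Subgroup.map_bot f,
    by show (c (Fin.last n)).map f = ⊤; rw [hl]; exact Subgroup.map_top_of_surjective f hf,
    fun i => (hnorm i).map f hf, fun i => ⟨Subgroup.map_mono (hstep i).1, ?_⟩⟩
  obtain ⟨g, hg, hle⟩ := (hstep i).2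
  refine ⟨f g, Subgroup.mem_map_of_mem f hg, ?_⟩
  have := Subgroup.map_mono (f := f) hle
  rwa [Subgroup.map_sup, MonoidHom.map_zpowers] at this

end StmtAux

end Aux

section StepQ

namespace StmtAux

open Subgroup

/-- The key step: in a group `Q` (which will be `K/D`), given a minimal normal subgroup `V`
inside a "nice" normal subgroup `M` containing the commutator subgroup, with a supplementing
supersoluble `B` which "subnormally absorbs" iterated commutators, `V` is cyclic. -/
lemma stepQ {Q : Type*} [Group Q] (V B M : Subgroup Q)
    (hV : V.Normal) (hVbot : V ≠ ⊥)
    (hmin : ∀ W : Subgroup Q, W.Normal → W ≤ V → W = ⊥ ∨ W = V)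
    (hM : M.Normal) (hMn : ∃ n, cChain M M n = ⊥)
    (hVM : V ≤ M) (hQ' : commutator Q ≤ M) (hBM : B ⊔ M = ⊤)
    (hBs : IsSupersolvable ↥B) (hsub : ∃ r, cChain ⊤ B r ≤ B) :
    ∃ v ∈ V, V ≤ Subgroup.zpowers v := by
  haveI := hV; haveI := hM
  -- M centralizes V
  have hcent : M ≤ centralizer (V : Set Q) := by
    have hTn : (⁅V, M⁆).Normal := Subgroup.commutator_normal V M
    rcases hmin ⁅V, M⁆ hTn (commutator_le_left V M) with hT | hT
    · rw [← commutator_eq_bot_iff_le_centralizer, commutator_comm M V]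
      exact hT
    · exfalso
      have hchain : ∀ j, cChain V M j = V := by
        intro j; induction j with
        | zero => rfl
        | succ j ih => rw [cChain_succ, ih, hT]
      obtain ⟨n, hn⟩ := hMn
      have hle : V ≤ ⊥ := by
        rw [← hn]
        calc V = cChain V M n := (hchain n).symm
          _ ≤ cChain M M n := cChain_mono hVM le_rfl n
      exact hVbot (le_bot_iff.mp hle)
  -- upgrade: B-invariant subgroups of V are normal
  have hup : ∀ Z : Subgroup Q, Z ≤ V → (∀ b ∈ B, ∀ z ∈ Z, b * z * b⁻¹ ∈ Z) → Z.Normal := by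
    intro Z hZV hB
    refine normal_of_sup_normalizes hBM hB ?_
    intro m hm z hz
    have h1 : z * m = m * z := mem_centralizer_iff.mp (hcent hm) z (hZV hz)
    have h2 : m * z * m⁻¹ = z := by rw [← h1]; group
    rwa [h2]
  -- the commutator with B
  have hTle : ⁅V, B⁆ ≤ V := commutator_le_left V B
  have hTnormal : (⁅V, B⁆).Normal := by
    refine hup ⁅V, B⁆ hTle ?_
    intro b hb x hx
    have hmaple : Subgroup.map (MulAut.conj b).toMonoidHom ⁅V, B⁆ ≤ ⁅V, B⁆ := by
      rw [map_commutator]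
      refine commutator_mono ?_ ?_
      · rintro _ ⟨v, hv, rfl⟩
        simpa using hV.conj_mem v hv b
      · rintro _ ⟨b', hb', rfl⟩
        simpa using mul_mem (mul_mem hb hb') (inv_mem hb)
    have hx' := hmaple (Subgroup.mem_map_of_mem (MulAut.conj b).toMonoidHom hx)
    simpa using hx'
  rcases hmin ⁅V, B⁆ hTnormal hTle with hT | hT
  · -- V is centralized by B, so every cyclic subgroup of V is normal
    have hVcB : V ≤ centralizer (B : Set Q) :=
      commutator_eq_bot_iff_le_centralizer.mp hT
    obtain ⟨v, hvV, hv1⟩ : ∃ v ∈ V, v ≠ (1 : Q) := by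
      by_contra hcon
      push_neg at hcon
      exact hVbot (eq_bot_iff.mpr fun x hx => Subgroup.mem_bot.mpr (hcon x hx))
    have hZle : Subgroup.zpowers v ≤ V := Subgroup.zpowers_le.mpr hvV
    have hZnorm : (Subgroup.zpowers v).Normal := by
      refine hup _ hZle ?_
      intro b hb z hz
      obtain ⟨k, rfl⟩ := Subgroup.mem_zpowers_iff.mp hz
      have hcomm : b * v = v * b := mem_centralizer_iff.mp (hVcB hvV) b hb
      have hsemi : SemiconjBy b v v := hcomm
      have h3 : b * v ^ k * b⁻¹ = v ^ k := by
        have := (hsemi.zpow_right k).eq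
        rw [this]; group
      rw [h3]
      exact zpow_mem (Subgroup.mem_zpowers v) k
    rcases hmin _ hZnorm hZle with hbotZ | hVZ
    · exact absurd (Subgroup.zpowers_eq_bot.mp hbotZ) hv1
    · exact ⟨v, hvV, le_of_eq hVZ.symm⟩
  · -- ⁅V,B⁆ = V forces V ≤ B by the subnormal-descent hypothesis
    obtain ⟨r, hr⟩ := hsub
    have hVB : V ≤ B := by
      have hchain : ∀ j, cChain V B j = V := by
        intro j; induction j with
        | zero => rfl
        | succ j ih => rw [cChain_succ, ih, hT]
      calc V = cChain V B r := (hchain r).symm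
        _ ≤ cChain ⊤ B r := cChain_mono le_top le_rfl r
        _ ≤ B := hr
    -- use the supersoluble series of B
    obtain ⟨m, cs, hc0, hcl, hcnorm, hcstep⟩ := hBs
    have hConj : ∀ i : Fin (m + 1), ∀ b ∈ B, ∀ z ∈ V ⊓ (cs i).map B.subtype,
        b * z * b⁻¹ ∈ V ⊓ (cs i).map B.subtype := by
      intro i b hb z hz
      refine ⟨hV.conj_mem z hz.1 b, ?_⟩
      obtain ⟨y, hy, hyz⟩ := hz.2
      have h3 := (hcnorm i).conj_mem y hy ⟨b, hb⟩
      refine ⟨_, h3, ?_⟩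
      show ((⟨b, hb⟩ * y * (⟨b, hb⟩)⁻¹ : ↥B) : Q) = b * z * b⁻¹
      rw [← hyz]
      rfl
    have hdich : ∀ i : Fin (m + 1), V ⊓ (cs i).map B.subtype = ⊥ ∨
        V ⊓ (cs i).map B.subtype = V :=
      fun i => hmin _ (hup _ inf_le_left (hConj i)) inf_le_left
    classical
    set Cf : ℕ → Subgroup Q :=
      fun j => if h : j < m + 1 then (cs ⟨j, h⟩).map B.subtype else ⊤ with hCf
    have hQ0 : ¬ V ≤ Cf 0 := by
      intro hle
      have hbot : Cf 0 = ⊥ := by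
        rw [hCf]
        simp only [dif_pos (Nat.succ_pos m)]
        have he : (⟨0, Nat.succ_pos m⟩ : Fin (m + 1)) = 0 := rfl
        rw [he, hc0, Subgroup.map_bot]
      exact hVbot (le_bot_iff.mp (hbot ▸ hle))
    have hQm : V ≤ Cf m := by
      have hBf : Cf m = B := by
        rw [hCf]
        simp only [dif_pos (Nat.lt_succ_self m)]
        have he : (⟨m, Nat.lt_succ_self m⟩ : Fin (m + 1)) = Fin.last m := rfl
        rw [he, hcl, ← MonoidHom.range_eq_map, Subgroup.range_subtype]
      rw [hBf]; exact hVB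
    obtain ⟨j, hj1, hjn, hjq⟩ := nat_cross (Q := fun j => V ≤ Cf j) hQ0 m hQm
    have hij : j < m := by omega
    set i : Fin m := ⟨j, hij⟩ with hi
    have hCfj : Cf j = (cs i.castSucc).map B.subtype := by
      rw [hCf]
      simp only [dif_pos (show j < m + 1 by omega)]
      congr 1
    have hCfj1 : Cf (j + 1) = (cs i.succ).map B.subtype := by
      rw [hCf]
      simp only [dif_pos (show j + 1 < m + 1 by omega)]
      congr 1
    have h1 : V ⊓ (cs i.castSucc).map B.subtype = ⊥ := by
      rcases hdich i.castSucc with h | h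
      · exact h
      · exact absurd (by rw [hCfj]; exact inf_eq_left.mp h) hjn
    have h2 : V ≤ (cs i.succ).map B.subtype := by
      rw [← hCfj1]; exact hjq
    obtain ⟨ghat, hghat, hle⟩ := (hcstep i).2
    haveI hcsn : (cs i.castSucc).Normal := hcnorm _
    have hVt1 : V.subgroupOf B ≤ cs i.castSucc ⊔ Subgroup.zpowers ghat := by
      intro x hx
      have hxV : (↑x : Q) ∈ V := hx
      have hxm : (↑x : Q) ∈ (cs i.succ).map B.subtype := h2 hxV
      obtain ⟨y, hy, hyx⟩ := hxm
      have hyxe : y = x := Subtype.ext hyx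
      rw [← hyxe]
      exact hle hy
    have hVt2 : V.subgroupOf B ⊓ cs i.castSucc = ⊥ := by
      rw [eq_bot_iff]
      rintro x ⟨hx1, hx2⟩
      have h3 : (↑x : Q) ∈ V ⊓ (cs i.castSucc).map B.subtype :=
        ⟨hx1, Subgroup.mem_map_of_mem _ hx2⟩
      rw [h1] at h3
      have h4 : (↑x : Q) = 1 := Subgroup.mem_bot.mp h3
      exact Subgroup.mem_bot.mpr (Subtype.ext h4)
    have hcyc : IsCyclic ↥(V.subgroupOf B) :=
      isCyclic_sandwich (cs i.castSucc) ghat (V.subgroupOf B) hVt1 hVt2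
    haveI hVcyc : IsCyclic ↥V :=
      isCyclic_of_surjective (Subgroup.subgroupOfEquivOfLe hVB)
        (Subgroup.subgroupOfEquivOfLe hVB).surjective
    obtain ⟨⟨v, hvV⟩, hgen⟩ := IsCyclic.exists_generator (α := ↥V)
    refine ⟨v, hvV, fun x hx => ?_⟩
    obtain ⟨k, hk⟩ := Subgroup.mem_zpowers_iff.mp (hgen ⟨x, hx⟩)
    refine Subgroup.mem_zpowers_iff.mpr ⟨k, ?_⟩
    simpa using congrArg Subtype.val hk

end StmtAux

end StepQ

section Assemble

namespace StmtAux

open Subgroup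
open scoped commutatorElement

variable {G : Type*} [Group G]

/-- A chain witnessing supersolvability starting from `D`. -/
def ChainFrom {K : Type*} [Group K] (D : Subgroup K) : Prop :=
  ∃ (n : ℕ) (c : Fin (n + 1) → Subgroup K),
    c 0 = D ∧ c (Fin.last n) = ⊤ ∧ (∀ i, (c i).Normal) ∧
    ∀ i : Fin n, c i.castSucc ≤ c i.succ ∧
      ∃ g ∈ c i.succ, c i.succ ≤ c i.castSucc ⊔ Subgroup.zpowers g

lemma chainFrom_top {K : Type*} [Group K] : ChainFrom (⊤ : Subgroup K) :=
  ⟨0, fun _ => ⊤, rfl, rfl, fun _ => inferInstance, fun i => i.elim0⟩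

lemma chainFrom_prepend {K : Type*} [Group K] {D E : Subgroup K} (hDE : D ≤ E)
    (hD : D.Normal) (hg : ∃ g ∈ E, E ≤ D ⊔ Subgroup.zpowers g) (hE : ChainFrom E) :
    ChainFrom D := by
  obtain ⟨n, c, h0, hl, hnorm, hstep⟩ := hE
  refine ⟨n + 1, Fin.cons D c, Fin.cons_zero _ _, ?_, ?_, ?_⟩
  · rw [← Fin.succ_last, Fin.cons_succ]; exact hl
  · intro i
    refine Fin.cases ?_ ?_ i
    · simpa using hD
    · intro j; simpa using hnorm j
  · intro i
    refine Fin.cases ?_ ?_ i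
    · constructor
      · rw [Fin.castSucc_zero, Fin.cons_zero, Fin.cons_succ, h0]
        exact hDE
      · rw [Fin.castSucc_zero, Fin.cons_zero, Fin.cons_succ, h0]
        exact hg
    · intro j
      constructor
      · rw [← Fin.succ_castSucc, Fin.cons_succ, Fin.cons_succ]
        exact (hstep j).1
      · rw [← Fin.succ_castSucc, Fin.cons_succ, Fin.cons_succ]
        exact (hstep j).2

lemma card_lt_of_lt {K : Type*} [Group K] [Finite K] {D E : Subgroup K} (h : D < E) :
    Nat.card ↥D < Nat.card ↥E := by
  have hss : (D : Set K) ⊂ (E : Set K) := by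
    rw [Set.ssubset_iff_subset_ne]
    exact ⟨fun x hx => h.le hx, fun he => h.ne (SetLike.coe_injective he)⟩
  calc Nat.card ↥D = (D : Set K).ncard := (Nat.card_coe_set_eq _)
    _ < (E : Set K).ncard := Set.ncard_lt_ncard hss (Set.toFinite _)
    _ = Nat.card ↥E := (Nat.card_coe_set_eq _).symm

lemma supersolvable_of_steps {K : Type*} [Group K] [Finite K]
    (h : ∀ D : Subgroup K, D.Normal → D ≠ ⊤ →
      ∃ E : Subgroup K, E.Normal ∧ D < E ∧ ∃ g ∈ E, E ≤ D ⊔ Subgroup.zpowers g) :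
    IsSupersolvable K := by
  have htopcard : Nat.card ↥(⊤ : Subgroup K) = Nat.card K :=
    Nat.card_congr Subgroup.topEquiv.toEquiv
  have main : ∀ (m : ℕ) (D : Subgroup K), D.Normal →
      Nat.card K - Nat.card ↥D ≤ m → ChainFrom D := by
    intro m
    induction m with
    | zero =>
      intro D hD hm
      have hDtop : D = ⊤ := by
        by_contra htop
        have h1 : Nat.card ↥D < Nat.card K :=
          htopcard ▸ card_lt_of_lt (lt_top_iff_ne_top.mpr htop)
        omega
      subst hDtop; exact chainFrom_top
    | succ m ih =>
      intro D hD hm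
      by_cases htop : D = ⊤
      · subst htop; exact chainFrom_top
      · obtain ⟨E, hE, hDE, hg⟩ := h D hD htop
        have h1 : Nat.card ↥D < Nat.card ↥E := card_lt_of_lt hDE
        have h2 : Nat.card ↥E ≤ Nat.card K := Subgroup.card_le_card_group E
        exact chainFrom_prepend hDE.le hD hg (ih E hE (by omega))
  obtain ⟨n, c, h0, hl, hnorm, hstep⟩ :=
    main (Nat.card K) ⊥ inferInstance (by omega)
  exact ⟨n, c, h0, hl, hnorm, hstep⟩

lemma subnormal_descent {A : Subgroup G} (hA : A.IsSubnormal') :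
    ∃ r, cChain ⊤ A r ≤ A := by
  obtain ⟨n, c, hc0, hcl, hstep⟩ := hA
  have hmem : ∀ (m : ℕ) (hm : m ≤ n), A ≤ c ⟨m, by omega⟩ := by
    intro m
    induction m with
    | zero =>
      intro _
      have he : (⟨0, by omega⟩ : Fin (n + 1)) = 0 := rfl
      rw [he, hc0]
    | succ m ih =>
      intro hm
      have h1 := ih (by omega)
      have h2 := (hstep ⟨m, by omega⟩).1
      have e1 : (Fin.castSucc (⟨m, by omega⟩ : Fin n) : Fin (n + 1)) = ⟨m, by omega⟩ := rfl
      have e2 : (Fin.succ (⟨m, by omega⟩ : Fin n) : Fin (n + 1)) = ⟨m + 1, by omega⟩ := rfl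
      rw [e1, e2] at h2
      exact h1.trans h2
  have hcomm : ∀ i : Fin n, ⁅c i.succ, c i.castSucc⁆ ≤ c i.castSucc := by
    intro i
    rw [commutator_le]
    intro x hx y hy
    have hyX : y ∈ c i.succ := (hstep i).1 hy
    have hnorm := (hstep i).2
    have hxyx : x * y * x⁻¹ ∈ c i.castSucc := by
      have h3 := hnorm.conj_mem ⟨y, hyX⟩ (Subgroup.mem_subgroupOf.mpr hy) ⟨x, hx⟩
      exact Subgroup.mem_subgroupOf.mp h3
    have he : ⁅x, y⁆ = x * y * x⁻¹ * y⁻¹ := commutatorElement_def x y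
    rw [he]
    exact mul_mem hxyx (inv_mem hy)
  have key : ∀ (m : ℕ) (hm : m ≤ n), cChain ⊤ A m ≤ c ⟨n - m, by omega⟩ := by
    intro m
    induction m with
    | zero =>
      intro _
      have he : (⟨n - 0, by omega⟩ : Fin (n + 1)) = Fin.last n := by
        ext; simp
      rw [he, hcl]
      exact le_top
    | succ m ih =>
      intro hm
      have hlt : n - (m + 1) < n := by omega
      have h4 : cChain ⊤ A m ≤ c ⟨n - m, by omega⟩ := ih (by omega)
      have h5 : A ≤ c ⟨n - (m + 1), by omega⟩ := hmem (n - (m + 1)) (by omega)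
      have h6 := hcomm ⟨n - (m + 1), hlt⟩
      have e1 : (Fin.castSucc (⟨n - (m + 1), hlt⟩ : Fin n) : Fin (n + 1)) =
          ⟨n - (m + 1), by omega⟩ := rfl
      have e2 : (Fin.succ (⟨n - (m + 1), hlt⟩ : Fin n) : Fin (n + 1)) =
          ⟨n - m, by omega⟩ := by
        ext
        simp only [Fin.val_succ]
        omega
      rw [e1, e2] at h6
      exact le_trans (commutator_mono h4 h5) h6
  refine ⟨n, ?_⟩
  have hfin := key n le_rfl
  have he : (⟨n - n, by omega⟩ : Fin (n + 1)) = 0 := by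
    ext; simp
  rw [he, hc0] at hfin
  exact hfin

end StmtAux

end Assemble

section FinalProof

open Subgroup StmtAux Pointwise

/-- If `A` is a supersoluble subnormal subgroup of a finite group `G` with
`G' ≤ F(G)` and `AG'` normal in `G`, then `AG'` is supersoluble.  (Since `G'`
is normal, the product `AG'` equals the join `A ⊔ G'`.) -/
theorem stmt_14 {G : Type*} [Group G] [Finite G] (A : Subgroup G)
    (hA : A.IsSubnormal') (hAs : IsSupersolvable A)
    (hG' : commutator G ≤ fittingSubgroup G)
    (hnorm : (A ⊔ commutator G).Normal) :
    IsSupersolvable ↥(A ⊔ commutator G) := by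
  classical
  haveI hfinSub : Finite (Subgroup G) :=
    Finite.of_injective (fun H : Subgroup G => (H : Set G)) SetLike.coe_injective
  have hniceS : Nice (sSup {N : Subgroup G | N.Normal ∧ Group.IsNilpotent N}) :=
    nice_sSup (Set.toFinite _) (fun N hN => nice_of_nilpotent N hN.1 hN.2)
  have hniceG' : Nice (commutator G) := nice_mono hG' inferInstance hniceS
  set U : Subgroup G := A ⊔ commutator G with hU
  have hAU : A ≤ U := le_sup_left
  have hGU : commutator G ≤ U := le_sup_right
  set B : Subgroup ↥U := A.subgroupOf U with hB
  set M : Subgroup ↥U := (commutator G).subgroupOf U with hM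
  haveI hMnorm : M.Normal := by
    rw [hM]; infer_instance
  have hcommK : commutator ↥U ≤ M := by
    rw [hM]
    show commutator ↥U ≤ Subgroup.comap U.subtype (commutator G)
    refine Subgroup.map_le_iff_le_comap.mp ?_
    rw [show commutator ↥U = ⁅(⊤ : Subgroup ↥U), ⊤⁆ from rfl, Subgroup.map_commutator]
    exact Subgroup.commutator_mono le_top le_top
  have hBMtop : B ⊔ M = ⊤ := by
    rw [eq_top_iff]
    rintro ⟨x, hx⟩ -
    have hx' : x ∈ (A : Set G) * (commutator G : Set G) := by
      rw [← Subgroup.mul_normal]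
      exact hx
    obtain ⟨a, ha, w, hw, haw⟩ := Set.mem_mul.mp hx'
    have haU : a ∈ U := hAU ha
    have hwU : w ∈ U := hGU hw
    have hxe : (⟨x, hx⟩ : ↥U) = ⟨a, haU⟩ * ⟨w, hwU⟩ := by
      apply Subtype.ext
      simp [← haw]
    rw [hxe]
    refine mul_mem (Subgroup.mem_sup_left ?_) (Subgroup.mem_sup_right ?_)
    · rw [hB]; exact ha
    · rw [hM]; exact hw
  have hMnice : ∃ n, cChain M M n = ⊥ := by
    obtain ⟨-, n, hn⟩ := hniceG'
    refine ⟨n, ?_⟩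
    have hmap : (cChain M M n).map U.subtype =
        cChain (commutator G) (commutator G) n := by
      rw [map_cChain]
      have hMs : M.map U.subtype = commutator G := by
        rw [hM, Subgroup.subgroupOf_map_subtype]
        exact inf_eq_left.mpr hGU
      rw [hMs]
    have hinj : Function.Injective (U.subtype) := Subgroup.subtype_injective U
    refine (Subgroup.map_eq_bot_iff_of_injective _ hinj).mp ?_
    rw [hmap, hn]
  obtain ⟨r, hr⟩ := subnormal_descent hA
  have hsubK : ∃ r', cChain ⊤ B r' ≤ B := by
    refine ⟨r, ?_⟩
    have hmap : ∀ j, (cChain ⊤ B j).map U.subtype ≤ cChain ⊤ A j := by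
      intro j
      induction j with
      | zero => exact le_top
      | succ j ih =>
        rw [cChain_succ, Subgroup.map_commutator, cChain_succ]
        refine Subgroup.commutator_mono ih ?_
        rw [hB, Subgroup.subgroupOf_map_subtype]
        exact inf_le_left
    have h1 : (cChain ⊤ B r).map U.subtype ≤ A := (hmap r).trans hr
    rw [hB]
    exact Subgroup.map_le_iff_le_comap.mp h1
  refine supersolvable_of_steps ?_
  intro D hD htop
  haveI := hD
  by_cases hMD : M ≤ D
  · obtain ⟨g, hgT, hgD⟩ := SetLike.exists_of_lt (show D < ⊤ from lt_top_iff_ne_top.mpr htop)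
    refine ⟨D ⊔ Subgroup.zpowers g, ?_, ?_, g,
      Subgroup.mem_sup_right (Subgroup.mem_zpowers g), le_rfl⟩
    · exact normal_of_commutator_le (hcommK.trans (hMD.trans le_sup_left))
    · refine lt_of_le_of_ne le_sup_left fun hEq => hgD ?_
      have hmm : g ∈ D ⊔ Subgroup.zpowers g := Subgroup.mem_sup_right (Subgroup.mem_zpowers g)
      rwa [← hEq] at hmm
  · set S : Set (Subgroup ↥U) := {V | V.Normal ∧ D < V ∧ V ≤ D ⊔ M} with hS
    have hDM : D < D ⊔ M := left_lt_sup.mpr hMD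
    haveI hDMn : (D ⊔ M).Normal := Subgroup.sup_normal D M
    have hSne : D ⊔ M ∈ S := ⟨hDMn, hDM, le_rfl⟩
    haveI : Finite (Subgroup ↥U) :=
      Finite.of_injective (fun H : Subgroup ↥U => (H : Set ↥U)) SetLike.coe_injective
    obtain ⟨V, hVS, hVmin⟩ := (wellFounded_lt (α := Subgroup ↥U)).has_min S ⟨_, hSne⟩
    obtain ⟨hVnorm, hDV, hVDM⟩ := hVS
    haveI := hVnorm
    set π : ↥U →* ↥U ⧸ D := QuotientGroup.mk' D with hπ
    have hπs : Function.Surjective π := QuotientGroup.mk'_surjective D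
    have hkerπ : π.ker = D := QuotientGroup.ker_mk' D
    have hmapD : D.map π = ⊥ := (Subgroup.map_eq_bot_iff D).mpr (le_of_eq hkerπ.symm)
    have hVmap_ne : V.map π ≠ ⊥ := by
      obtain ⟨x, hxV, hxD⟩ := SetLike.exists_of_lt hDV
      intro hbot
      have h3 : π x ∈ V.map π := Subgroup.mem_map_of_mem π hxV
      rw [hbot] at h3
      exact hxD (hkerπ ▸ MonoidHom.mem_ker.mpr (Subgroup.mem_bot.mp h3))
    have hminQ : ∀ W : Subgroup (↥U ⧸ D), W.Normal → W ≤ V.map π →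
        W = ⊥ ∨ W = V.map π := by
      intro W hW hWV
      have hX : D ≤ W.comap π := by
        intro d hd
        have h3 : π d = 1 := MonoidHom.mem_ker.mp (hkerπ.symm ▸ hd)
        show π d ∈ W
        rw [h3]; exact one_mem W
      have hXV : W.comap π ≤ V := by
        refine le_trans (Subgroup.comap_mono hWV) ?_
        rw [Subgroup.comap_map_eq, hkerπ]
        exact sup_le le_rfl hDV.le
      by_cases hXD : W.comap π = D
      · left
        have h3 := Subgroup.map_comap_eq_self_of_surjective hπs W
        rw [← h3, hXD, hmapD]
      · right
        haveI := hW
        have hXS : W.comap π ∈ S := by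
          refine ⟨Subgroup.normal_comap π, lt_of_le_of_ne hX (fun h => hXD h.symm),
            hXV.trans hVDM⟩
        have hnotlt : ¬ (W.comap π < V) := hVmin _ hXS
        have hXeq : W.comap π = V := (lt_or_eq_of_le hXV).resolve_left hnotlt
        rw [← Subgroup.map_comap_eq_self_of_surjective hπs W, hXeq]
    have hVmapM : V.map π ≤ M.map π := by
      calc V.map π ≤ (D ⊔ M).map π := Subgroup.map_mono hVDM
        _ = D.map π ⊔ M.map π := Subgroup.map_sup D M π
        _ = M.map π := by rw [hmapD, bot_sup_eq]
    have hcommQ : commutator (↥U ⧸ D) ≤ M.map π := by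
      have h3 : commutator (↥U ⧸ D) = (commutator ↥U).map π := by
        rw [show commutator (↥U ⧸ D) = ⁅(⊤ : Subgroup (↥U ⧸ D)), ⊤⁆ from rfl,
          show commutator ↥U = ⁅(⊤ : Subgroup ↥U), ⊤⁆ from rfl,
          Subgroup.map_commutator, Subgroup.map_top_of_surjective π hπs]
      rw [h3]
      exact Subgroup.map_mono hcommK
    have hMQnice : ∃ n, cChain (M.map π) (M.map π) n = ⊥ := by
      obtain ⟨n, hn⟩ := hMnice
      exact ⟨n, by rw [← map_cChain, hn, Subgroup.map_bot]⟩
    have hBMQ : B.map π ⊔ M.map π = ⊤ := by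
      rw [← Subgroup.map_sup, hBMtop, Subgroup.map_top_of_surjective π hπs]
    have hBQss : IsSupersolvable ↥(B.map π) := by
      have h1 : IsSupersolvable ↥B := by
        refine isSupersolvable_of_surjective
          (Subgroup.subgroupOfEquivOfLe hAU).symm.toMonoidHom ?_ hAs
        exact (Subgroup.subgroupOfEquivOfLe hAU).symm.surjective
      exact isSupersolvable_of_surjective (π.subgroupMap B) (π.subgroupMap_surjective B) h1
    have hsubQ : ∃ r', cChain ⊤ (B.map π) r' ≤ B.map π := by
      obtain ⟨r', hr'⟩ := hsubK
      refine ⟨r', ?_⟩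
      have h3 : cChain ⊤ (B.map π) r' = (cChain ⊤ B r').map π := by
        rw [map_cChain, Subgroup.map_top_of_surjective π hπs]
      rw [h3]
      exact Subgroup.map_mono hr'
    haveI hVQn : (V.map π).Normal := hVnorm.map π hπs
    haveI hMQn : (M.map π).Normal := hMnorm.map π hπs
    obtain ⟨vbar, hvbarV, hgen⟩ := stepQ (V.map π) (B.map π) (M.map π)
      hVQn hVmap_ne hminQ hMQn hMQnice hVmapM hcommQ hBMQ hBQss hsubQ
    obtain ⟨v, hvV, rfl⟩ := hvbarV
    refine ⟨V, hVnorm, hDV, v, hvV, ?_⟩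
    intro x hx
    obtain ⟨k, hk⟩ := Subgroup.mem_zpowers_iff.mp (hgen (Subgroup.mem_map_of_mem π hx))
    have hpik : π (v ^ k) = π x := by rw [map_zpow]; exact hk
    have hd : x * (v ^ k)⁻¹ ∈ D := by
      rw [← hkerπ]
      refine MonoidHom.mem_ker.mpr ?_
      rw [map_mul, map_inv, hpik]
      group
    have hx2 : x = x * (v ^ k)⁻¹ * v ^ k := by group
    rw [hx2]
    exact mul_mem (Subgroup.mem_sup_left hd)
      (Subgroup.mem_sup_right (zpow_mem (Subgroup.mem_zpowers v) k))

end FinalProof
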